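/- arXiv:2003.11964 — 4 statements merged into one kernel-verified Lean document; each statement's English description precedes it below -/
import Mathlib

section
/- Let X₁, X₂, … be a sequence of real random variables each with mean μ, with Var(X_i) ≤ c < ∞ for all i, and with Cov(X_i, X_j) → 0 as |i−j| → ∞. Then the partial averages (X₁ + ⋯ + X_n)/n converge in probability to μ: for every ε > 0, lim_{n→∞} P(|(X₁+⋯+X_n)/n − μ| ≥ ε) = 0. -/
open MeasureTheory ProbabilityTheory Filter

private lemma abs_mul_le_half_sq_add_sq (a b : ℝ) : |a| * |b| ≤ (a ^ 2 + b ^ 2) / 2 := by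
  nlinarith [sq_nonneg (|a| - |b|), sq_abs a, sq_abs b, abs_nonneg a, abs_nonneg b]

/-- Weak law of large numbers for random variables with common mean, uniformly bounded
variances, and covariances decaying as the index separation grows. -/
theorem stmt3 {Ω : Type*} {m0 : MeasurableSpace Ω} (P : Measure Ω) [IsProbabilityMeasure P]
    (X : ℕ → Ω → ℝ) (μ c : ℝ)
    (hL2 : ∀ i, MemLp (X i) 2 P)
    (hmean : ∀ i, ∫ ω, X i ω ∂P = μ)
    (hvar : ∀ i, variance (X i) P ≤ c)
    (hcov : ∀ δ > (0 : ℝ), ∃ M : ℕ, ∀ i j : ℕ, M ≤ max (i - j) (j - i) →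
      |∫ ω, (X i ω - μ) * (X j ω - μ) ∂P| ≤ δ) :
    ∀ ε > (0 : ℝ), Tendsto (fun n : ℕ =>
      P {ω | ε ≤ |(∑ i ∈ Finset.range n, X i ω) / n - μ|}) atTop (nhds 0) := by
  have hc0 : 0 ≤ c := le_trans (variance_nonneg (X 0) P) (hvar 0)
  set Y : ℕ → Ω → ℝ := fun i ω => X i ω - μ with hYdef
  have hYL2 : ∀ i, MemLp (Y i) 2 P := fun i => (hL2 i).sub (memLp_const μ)
  have hYm : ∀ i, AEStronglyMeasurable (Y i) P := fun i => (hYL2 i).aestronglyMeasurable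
  have hYsq_int : ∀ i, Integrable (fun ω => Y i ω ^ 2) P := fun i => (hYL2 i).integrable_sq
  have hYsq_le : ∀ i, ∫ ω, Y i ω ^ 2 ∂P ≤ c := by
    intro i
    have h1 : variance (X i) P = ∫ ω, Y i ω ^ 2 ∂P := by
      rw [variance_eq_integral (hL2 i).aestronglyMeasurable.aemeasurable, hmean i]
    rw [← h1]; exact hvar i
  have hmul_int : ∀ i j, Integrable (fun ω => Y i ω * Y j ω) P := by
    intro i j
    refine Integrable.mono' (((hYsq_int i).add (hYsq_int j)).div_const 2)
      ((hYm i).mul (hYm j)) ?_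
    filter_upwards with ω
    rw [norm_mul, Real.norm_eq_abs, Real.norm_eq_abs]
    simp only [Pi.add_apply]
    exact abs_mul_le_half_sq_add_sq _ _
  have hcov_c : ∀ i j, |∫ ω, Y i ω * Y j ω ∂P| ≤ c := by
    intro i j
    calc |∫ ω, Y i ω * Y j ω ∂P| ≤ ∫ ω, |Y i ω| * |Y j ω| ∂P := by
          simpa [Real.norm_eq_abs, abs_mul] using
            norm_integral_le_integral_norm (fun ω => Y i ω * Y j ω) (μ := P)
      _ ≤ ∫ ω, (Y i ω ^ 2 + Y j ω ^ 2) / 2 ∂P := by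
          refine integral_mono ?_ (((hYsq_int i).add (hYsq_int j)).div_const 2) ?_
          · simpa [abs_mul] using (hmul_int i j).abs
          intro ω
          exact abs_mul_le_half_sq_add_sq _ _
      _ = ((∫ ω, Y i ω ^ 2 ∂P) + ∫ ω, Y j ω ^ 2 ∂P) / 2 := by
          rw [integral_div, integral_add (hYsq_int i) (hYsq_int j)]
      _ ≤ (c + c) / 2 := by
          have := hYsq_le i; have := hYsq_le j; linarith
      _ = c := by ring
  -- expansion of the second moment of the partial sums
  have hexp : ∀ n : ℕ, ∫ ω, (∑ i ∈ Finset.range n, Y i ω) ^ 2 ∂P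
      = ∑ i ∈ Finset.range n, ∑ j ∈ Finset.range n, ∫ ω, Y i ω * Y j ω ∂P := by
    intro n
    have h1 : ∀ ω, (∑ i ∈ Finset.range n, Y i ω) ^ 2
        = ∑ i ∈ Finset.range n, ∑ j ∈ Finset.range n, Y i ω * Y j ω := by
      intro ω; rw [sq, Finset.sum_mul_sum]
    simp_rw [h1]
    rw [integral_finset_sum _ (fun i _ => integrable_finset_sum _ (fun j _ => hmul_int i j))]
    exact Finset.sum_congr rfl fun i _ => integral_finset_sum _ fun j _ => hmul_int i j
  -- the key second moment estimate
  have hsum : ∀ δ : ℝ, 0 ≤ δ → ∀ M : ℕ,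
      (∀ i j : ℕ, M ≤ max (i - j) (j - i) → |∫ ω, Y i ω * Y j ω ∂P| ≤ δ) →
      ∀ n : ℕ, ∫ ω, (∑ i ∈ Finset.range n, Y i ω) ^ 2 ∂P
        ≤ n * (2 * M * c) + n ^ 2 * δ := by
    intro δ hδ M hM n
    rw [hexp n]
    have inner : ∀ i, ∑ j ∈ Finset.range n, ∫ ω, Y i ω * Y j ω ∂P
        ≤ 2 * M * c + n * δ := by
      intro i
      classical
      rw [← Finset.sum_filter_add_sum_filter_not (Finset.range n)
        (fun j => max (i - j) (j - i) < M)]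
      have h1 : ∑ j ∈ (Finset.range n).filter (fun j => max (i - j) (j - i) < M),
          ∫ ω, Y i ω * Y j ω ∂P ≤ 2 * M * c := by
        calc _ ≤ ((Finset.range n).filter (fun j => max (i - j) (j - i) < M)).card • c :=
              Finset.sum_le_card_nsmul _ _ _ (fun j _ => (le_abs_self _).trans (hcov_c i j))
          _ ≤ (2 * M : ℕ) • c := by
              refine nsmul_le_nsmul_left hc0 ?_
              have hsub : (Finset.range n).filter (fun j => max (i - j) (j - i) < M)
                  ⊆ Finset.Ico (i - M) (i + M) := by
                intro j hj
                simp only [Finset.mem_filter, Finset.mem_range, max_lt_iff] at hj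
                rw [Finset.mem_Ico]
                omega
              have := Finset.card_le_card hsub
              rw [Nat.card_Ico] at this
              omega
          _ = 2 * M * c := by
              rw [nsmul_eq_mul]; push_cast; ring
      have h2 : ∑ j ∈ (Finset.range n).filter (fun j => ¬ max (i - j) (j - i) < M),
          ∫ ω, Y i ω * Y j ω ∂P ≤ n * δ := by
        calc _ ≤ ((Finset.range n).filter (fun j => ¬ max (i - j) (j - i) < M)).card • δ := by
              refine Finset.sum_le_card_nsmul _ _ _ (fun j hj => ?_)
              simp only [Finset.mem_filter, not_lt] at hj
              exact (le_abs_self _).trans (hM i j hj.2)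
          _ ≤ n • δ := by
              refine nsmul_le_nsmul_left hδ ?_
              simpa using Finset.card_filter_le (Finset.range n) _
          _ = n * δ := nsmul_eq_mul _ _
      linarith
    calc ∑ i ∈ Finset.range n, ∑ j ∈ Finset.range n, ∫ ω, Y i ω * Y j ω ∂P
        ≤ ∑ _i ∈ Finset.range n, (2 * M * c + n * δ) :=
          Finset.sum_le_sum fun i _ => inner i
      _ = n * (2 * M * c + n * δ) := by
          rw [Finset.sum_const, Finset.card_range, nsmul_eq_mul]
      _ = n * (2 * M * c) + n ^ 2 * δ := by ring
  -- integrability of the squared partial sums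
  have hT_int : ∀ n : ℕ, Integrable (fun ω => (∑ i ∈ Finset.range n, Y i ω) ^ 2) P := by
    intro n
    have : MemLp (∑ i ∈ Finset.range n, Y i) 2 P :=
      memLp_finset_sum' _ (fun i _ => hYL2 i)
    have h2 := this.integrable_sq
    refine h2.congr (ae_of_all _ fun ω => ?_)
    simp [Finset.sum_apply]
  intro ε hε
  -- Chebyshev bound, for n ≥ 1
  have cheb : ∀ n : ℕ, 1 ≤ n →
      (P {ω | ε ≤ |(∑ i ∈ Finset.range n, X i ω) / n - μ|}).toReal
        ≤ (∫ ω, (∑ i ∈ Finset.range n, Y i ω) ^ 2 ∂P) / ((n : ℝ) * ε) ^ 2 := by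
    intro n hn
    have hnpos : (0 : ℝ) < n := by exact_mod_cast hn
    have hset : {ω | ε ≤ |(∑ i ∈ Finset.range n, X i ω) / n - μ|}
        = {ω | ((n : ℝ) * ε) ^ 2 ≤ (∑ i ∈ Finset.range n, Y i ω) ^ 2} := by
      ext ω
      simp only [Set.mem_setOf_eq]
      have hT : (∑ i ∈ Finset.range n, X i ω) / n - μ
          = (∑ i ∈ Finset.range n, Y i ω) / n := by
        have : ∑ i ∈ Finset.range n, Y i ω
            = (∑ i ∈ Finset.range n, X i ω) - n * μ := by
          simp [hYdef, Finset.sum_sub_distrib, mul_comm]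
        rw [this]; field_simp
      rw [hT]
      rw [abs_div, abs_of_pos hnpos, le_div_iff₀ hnpos]
      constructor
      · intro h
        have h' : (n : ℝ) * ε ≤ |∑ i ∈ Finset.range n, Y i ω| := by
          rw [mul_comm]; exact h
        calc ((n : ℝ) * ε) ^ 2 ≤ |∑ i ∈ Finset.range n, Y i ω| ^ 2 := by
              exact pow_le_pow_left₀ (by positivity) h' 2
          _ = (∑ i ∈ Finset.range n, Y i ω) ^ 2 := sq_abs _
      · intro h
        rw [mul_comm]
        have h' : ((n : ℝ) * ε) ^ 2 ≤ |∑ i ∈ Finset.range n, Y i ω| ^ 2 := by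
          rwa [sq_abs]
        exact (pow_le_pow_iff_left₀ (by positivity) (abs_nonneg _) two_ne_zero).mp h'
    rw [hset]
    have hmark := mul_meas_ge_le_integral_of_nonneg
      (ae_of_all P fun ω => sq_nonneg (∑ i ∈ Finset.range n, Y i ω))
      (hT_int n) (((n : ℝ) * ε) ^ 2)
    have hpos : (0 : ℝ) < ((n : ℝ) * ε) ^ 2 := by positivity
    rw [le_div_iff₀ hpos]
    calc (P {ω | ((n : ℝ) * ε) ^ 2 ≤ (∑ i ∈ Finset.range n, Y i ω) ^ 2}).toReal
          * ((n : ℝ) * ε) ^ 2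
        = ((n : ℝ) * ε) ^ 2 *
          (P {ω | ((n : ℝ) * ε) ^ 2 ≤ (∑ i ∈ Finset.range n, Y i ω) ^ 2}).toReal :=
          mul_comm _ _
      _ ≤ _ := hmark
  -- the real-valued probabilities tend to 0
  have key : Tendsto (fun n : ℕ =>
      (P {ω | ε ≤ |(∑ i ∈ Finset.range n, X i ω) / n - μ|}).toReal) atTop (nhds 0) := by
    rw [Metric.tendsto_atTop]
    intro η hη
    set δ : ℝ := η * ε ^ 2 / 4 with hδdef
    have hδpos : 0 < δ := by positivity
    obtain ⟨M, hM⟩ := hcov δ hδpos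
    have hM' : ∀ i j : ℕ, M ≤ max (i - j) (j - i) → |∫ ω, Y i ω * Y j ω ∂P| ≤ δ :=
      fun i j h => hM i j h
    obtain ⟨N₀, hN₀⟩ := exists_nat_gt ((8 * M * c) / (η * ε ^ 2))
    refine ⟨max 1 (N₀ + 1), fun n hn => ?_⟩
    have hn1 : 1 ≤ n := le_trans (le_max_left _ _) hn
    have hnN : N₀ + 1 ≤ n := le_trans (le_max_right _ _) hn
    have hnpos : (0 : ℝ) < n := by exact_mod_cast hn1
    have hnR : (8 * M * c) / (η * ε ^ 2) < (n : ℝ) := by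
      calc (8 * M * c) / (η * ε ^ 2) < (N₀ : ℝ) := hN₀
        _ ≤ (n : ℝ) := by exact_mod_cast Nat.le_of_succ_le hnN
    have h8 : 8 * (M : ℝ) * c < (n : ℝ) * (η * ε ^ 2) := by
      rw [div_lt_iff₀ (by positivity)] at hnR
      linarith
    have hb := cheb n hn1
    have hb2 := hsum δ hδpos.le M hM' n
    have hfrac : (∫ ω, (∑ i ∈ Finset.range n, Y i ω) ^ 2 ∂P) / ((n : ℝ) * ε) ^ 2
        ≤ η / 2 := by
      rw [div_le_iff₀ (by positivity)]
      calc (∫ ω, (∑ i ∈ Finset.range n, Y i ω) ^ 2 ∂P)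
          ≤ n * (2 * M * c) + n ^ 2 * δ := hb2
        _ ≤ η / 2 * ((n : ℝ) * ε) ^ 2 := by
            rw [hδdef]
            nlinarith [sq_nonneg ((n : ℝ) * ε), hnpos, h8, hε, sq_nonneg (n : ℝ)]
    have htoReal_nonneg : (0 : ℝ) ≤
        (P {ω | ε ≤ |(∑ i ∈ Finset.range n, X i ω) / n - μ|}).toReal :=
      ENNReal.toReal_nonneg
    rw [Real.dist_eq, sub_zero, abs_of_nonneg htoReal_nonneg]
    calc (P {ω | ε ≤ |(∑ i ∈ Finset.range n, X i ω) / n - μ|}).toReal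
        ≤ (∫ ω, (∑ i ∈ Finset.range n, Y i ω) ^ 2 ∂P) / ((n : ℝ) * ε) ^ 2 := hb
      _ ≤ η / 2 := hfrac
      _ < η := by linarith
  -- conclude for the ENNReal-valued measures
  have heq : ∀ n : ℕ, P {ω | ε ≤ |(∑ i ∈ Finset.range n, X i ω) / n - μ|}
      = ENNReal.ofReal ((P {ω | ε ≤ |(∑ i ∈ Finset.range n, X i ω) / n - μ|}).toReal) :=
    fun n => (ENNReal.ofReal_toReal (measure_ne_top P _)).symm
  refine Tendsto.congr (fun n => (heq n).symm) ?_
  simpa using ENNReal.tendsto_ofReal key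
end

section
/- Let φ : ℝ² → ℝ be PL(2) with constant L, and define φ_m : ℝᵐ × ℝᵐ → ℝ by φ_m(a, ã) = (1/m)·Σ_{i=1}^m φ(a_i, ã_i). Then φ_m is PL(2) with constant √3·L independent of m; specifically, |φ_m(a,ã) − φ_m(b,b̃)| ≤ √3·L·(1 + ‖(a,ã)‖/√(2m) + ‖(b,b̃)‖/√(2m))·‖(a,ã)−(b,b̃)‖/√(2m). -/
set_option maxHeartbeats 1000000

open Finset

/-- If φ : ℝ² → ℝ is PL(2) with constant L, the coordinatewise average
φ_m(a,ã) = (1/m) Σ φ(a_i, ã_i) is PL(2) with constant √3·L, uniformly in m. -/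
theorem stmt5 (m : ℕ) (hm : 0 < m) (L : ℝ) (hL : 0 < L) (φ : ℝ → ℝ → ℝ)
    (hφ : ∀ a1 a2 b1 b2 : ℝ, |φ a1 a2 - φ b1 b2| ≤
      L * (1 + Real.sqrt (a1 ^ 2 + a2 ^ 2) / Real.sqrt 2
             + Real.sqrt (b1 ^ 2 + b2 ^ 2) / Real.sqrt 2) *
        (Real.sqrt ((a1 - b1) ^ 2 + (a2 - b2) ^ 2) / Real.sqrt 2))
    (a a' b b' : Fin m → ℝ) :
    |(1 / (m : ℝ)) * ∑ i, φ (a i) (a' i) - (1 / (m : ℝ)) * ∑ i, φ (b i) (b' i)| ≤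
      Real.sqrt 3 * L *
        (1 + Real.sqrt (∑ i, (a i ^ 2 + a' i ^ 2)) / Real.sqrt (2 * m)
           + Real.sqrt (∑ i, (b i ^ 2 + b' i ^ 2)) / Real.sqrt (2 * m)) *
        (Real.sqrt (∑ i, ((a i - b i) ^ 2 + (a' i - b' i) ^ 2)) / Real.sqrt (2 * m)) := by
  have hm' : (0:ℝ) < m := by exact_mod_cast hm
  have h2 : (0:ℝ) < Real.sqrt 2 := by positivity
  set c : Fin m → ℝ := fun i => 1 + Real.sqrt (a i ^ 2 + a' i ^ 2) / Real.sqrt 2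
      + Real.sqrt (b i ^ 2 + b' i ^ 2) / Real.sqrt 2 with hc
  set d : Fin m → ℝ := fun i => Real.sqrt ((a i - b i) ^ 2 + (a' i - b' i) ^ 2) with hd
  set SA := ∑ i, (a i ^ 2 + a' i ^ 2) with hSA
  set SB := ∑ i, (b i ^ 2 + b' i ^ 2) with hSB
  set SD := ∑ i, ((a i - b i) ^ 2 + (a' i - b' i) ^ 2) with hSD
  -- Step A
  have stepA : |(1/(m:ℝ)) * ∑ i, φ (a i) (a' i) - (1/(m:ℝ)) * ∑ i, φ (b i) (b' i)|
      ≤ (1/(m:ℝ)) * ((L / Real.sqrt 2) * ∑ i, c i * d i) := by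
    rw [← mul_sub, ← Finset.sum_sub_distrib, abs_mul]
    gcongr
    · simp [abs_of_nonneg, le_of_lt hm']
    calc |∑ i, (φ (a i) (a' i) - φ (b i) (b' i))|
        ≤ ∑ i, |φ (a i) (a' i) - φ (b i) (b' i)| := Finset.abs_sum_le_sum_abs _ _
      _ ≤ ∑ i, L * c i * (d i / Real.sqrt 2) := by
          apply Finset.sum_le_sum
          intro i _
          exact hφ (a i) (a' i) (b i) (b' i)
      _ = (L / Real.sqrt 2) * ∑ i, c i * d i := by
          rw [Finset.mul_sum]; apply Finset.sum_congr rfl; intro i _; ring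
  -- Cauchy-Schwarz
  have stepB : ∑ i, c i * d i ≤ Real.sqrt (∑ i, c i ^ 2) * Real.sqrt SD := by
    have := Real.sum_mul_le_sqrt_mul_sqrt Finset.univ c d
    have hde : ∑ i, d i ^ 2 = SD := by
      apply Finset.sum_congr rfl
      intro i _
      exact Real.sq_sqrt (by positivity)
    rwa [hde] at this
  -- bound sum of c²
  have stepC : ∑ i, c i ^ 2 ≤ 3 * ((m:ℝ) + SA / 2 + SB / 2) := by
    have : ∑ i, c i ^ 2 ≤ ∑ i, 3 * (1 + (a i ^ 2 + a' i ^ 2)/2 + (b i ^ 2 + b' i ^ 2)/2) := by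
      apply Finset.sum_le_sum
      intro i _
      have hxa : Real.sqrt (a i ^ 2 + a' i ^ 2) ^ 2 = a i ^ 2 + a' i ^ 2 :=
        Real.sq_sqrt (by positivity)
      have hxb : Real.sqrt (b i ^ 2 + b' i ^ 2) ^ 2 = b i ^ 2 + b' i ^ 2 :=
        Real.sq_sqrt (by positivity)
      have h22 : Real.sqrt 2 ^ 2 = 2 := Real.sq_sqrt (by norm_num)
      set u := Real.sqrt (a i ^ 2 + a' i ^ 2) / Real.sqrt 2 with hu
      set v := Real.sqrt (b i ^ 2 + b' i ^ 2) / Real.sqrt 2 with hv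
      have hu2 : u ^ 2 = (a i ^ 2 + a' i ^ 2) / 2 := by
        rw [hu, div_pow, hxa, h22]
      have hv2 : v ^ 2 = (b i ^ 2 + b' i ^ 2) / 2 := by
        rw [hv, div_pow, hxb, h22]
      have : c i = 1 + u + v := rfl
      rw [this, ← hu2, ← hv2]
      nlinarith [sq_nonneg (u - 1), sq_nonneg (v - 1), sq_nonneg (u - v)]
    calc ∑ i, c i ^ 2 ≤ _ := this
      _ = 3 * ((m:ℝ) + SA / 2 + SB / 2) := by
          rw [Finset.sum_congr rfl (fun i _ => by ring :
            ∀ i ∈ Finset.univ, 3 * (1 + (a i ^ 2 + a' i ^ 2)/2 + (b i ^ 2 + b' i ^ 2)/2)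
              = 3 + (3/2) * (a i ^ 2 + a' i ^ 2) + (3/2) * (b i ^ 2 + b' i ^ 2))]
          rw [Finset.sum_add_distrib, Finset.sum_add_distrib, ← Finset.mul_sum, ← Finset.mul_sum]
          simp [hSA, hSB]
          ring
  have hSAnn : 0 ≤ SA := Finset.sum_nonneg fun i _ => by positivity
  have hSBnn : 0 ≤ SB := Finset.sum_nonneg fun i _ => by positivity
  have hSDnn : 0 ≤ SD := Finset.sum_nonneg fun i _ => by positivity
  -- step D : sqrt bound
  have sqrt_add_le : ∀ x y : ℝ, 0 ≤ x → 0 ≤ y → Real.sqrt (x + y) ≤ Real.sqrt x + Real.sqrt y := by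
    intro x y hx hy
    rw [show Real.sqrt x + Real.sqrt y = Real.sqrt ((Real.sqrt x + Real.sqrt y)^2) from
      (Real.sqrt_sq (by positivity)).symm]
    apply Real.sqrt_le_sqrt
    have hx' := Real.sq_sqrt hx
    have hy' := Real.sq_sqrt hy
    nlinarith [Real.sqrt_nonneg x, Real.sqrt_nonneg y]
  have stepD : Real.sqrt (∑ i, c i ^ 2)
      ≤ Real.sqrt 3 * (Real.sqrt m + Real.sqrt SA / Real.sqrt 2 + Real.sqrt SB / Real.sqrt 2) := by
    calc Real.sqrt (∑ i, c i ^ 2) ≤ Real.sqrt (3 * ((m:ℝ) + SA / 2 + SB / 2)) :=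
          Real.sqrt_le_sqrt stepC
      _ = Real.sqrt 3 * Real.sqrt ((m:ℝ) + SA / 2 + SB / 2) := Real.sqrt_mul (by norm_num) _
      _ ≤ Real.sqrt 3 * (Real.sqrt m + Real.sqrt SA / Real.sqrt 2 + Real.sqrt SB / Real.sqrt 2) := by
          apply mul_le_mul_of_nonneg_left _ (Real.sqrt_nonneg 3)
          calc Real.sqrt ((m:ℝ) + SA / 2 + SB / 2)
              ≤ Real.sqrt ((m:ℝ) + SA / 2) + Real.sqrt (SB / 2) :=
                sqrt_add_le _ _ (by positivity) (by positivity)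
            _ ≤ Real.sqrt m + Real.sqrt (SA / 2) + Real.sqrt (SB / 2) := by
                gcongr ?_ + _
                exact sqrt_add_le _ _ (by positivity) (by positivity)
            _ = Real.sqrt m + Real.sqrt SA / Real.sqrt 2 + Real.sqrt SB / Real.sqrt 2 := by
                rw [Real.sqrt_div hSAnn, Real.sqrt_div hSBnn]
  -- combine
  have hsm : Real.sqrt m > 0 := Real.sqrt_pos.2 hm'
  have hsm2 : Real.sqrt m ^ 2 = (m:ℝ) := Real.sq_sqrt (le_of_lt hm')
  have h2m : Real.sqrt (2 * m) = Real.sqrt 2 * Real.sqrt m := Real.sqrt_mul (by norm_num) _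
  have hcd_nonneg : ∀ i, 0 ≤ c i * d i := by
    intro i
    have : 0 ≤ c i := by rw [hc]; positivity
    exact mul_nonneg this (Real.sqrt_nonneg _)
  calc |(1/(m:ℝ)) * ∑ i, φ (a i) (a' i) - (1/(m:ℝ)) * ∑ i, φ (b i) (b' i)|
      ≤ (1/(m:ℝ)) * ((L / Real.sqrt 2) * ∑ i, c i * d i) := stepA
    _ ≤ (1/(m:ℝ)) * ((L / Real.sqrt 2) *
          (Real.sqrt 3 * (Real.sqrt m + Real.sqrt SA / Real.sqrt 2 + Real.sqrt SB / Real.sqrt 2)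
            * Real.sqrt SD)) := by
        have step : ∑ i, c i * d i ≤
            Real.sqrt 3 * (Real.sqrt m + Real.sqrt SA / Real.sqrt 2 + Real.sqrt SB / Real.sqrt 2)
              * Real.sqrt SD :=
          stepB.trans (mul_le_mul_of_nonneg_right stepD (Real.sqrt_nonneg _))
        have h1 : (0:ℝ) ≤ L / Real.sqrt 2 := by positivity
        have h0 : (0:ℝ) ≤ 1 / (m:ℝ) := by positivity
        exact mul_le_mul_of_nonneg_left (mul_le_mul_of_nonneg_left step h1) h0
    _ = Real.sqrt 3 * L *
        (1 + Real.sqrt SA / Real.sqrt (2 * m) + Real.sqrt SB / Real.sqrt (2 * m)) *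
        (Real.sqrt SD / Real.sqrt (2 * m)) := by
        rw [h2m]
        have : (m:ℝ) = Real.sqrt m * Real.sqrt m := by
          rw [← pow_two, hsm2]
        rw [this]
        have h22 : Real.sqrt 2 ^ 2 = (2:ℝ) := Real.sq_sqrt (by norm_num)
        field_simp
        rw [Real.sqrt_sq hsm.le]
end

section
/- Define the Bernoulli–Gaussian denoiser η(a,b) = f(a,b)/(1 + T(a,b)) where f(a,b) = (σ²a + λ²b)/(σ² + λ² + σ²λ²) and T(a,b) = ((1−ε)/ε)·(ν√(2π)/(λ²σ²))·ρ_ν(σ²a + λ²b) with ν = σ²λ²(σ² + λ² + σ²λ²) and ρ_ν the centered Gaussian density with variance ν, for parameters 0 < ε < 1, σ > 0, λ ≥ σ_w > 0. Then the partial derivatives satisfy |∂η/∂a| ≤ 1 + 2(1−ε)/(σ_w·ε) and |∂η/∂b| ≤ 1 + 2(1−ε)/(σ·ε) everywhere; consequently η is Lipschitz continuous on ℝ². -/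
lemma aux_g (ν c D : ℝ) (hν : 0 < ν) (hc : 0 < c) (hD : 0 < D) (x : ℝ) :
    ∃ y : ℝ,
      HasDerivAt (fun x : ℝ => (x / D) /
        (1 + c * ((1 / Real.sqrt (2 * Real.pi * ν)) * Real.exp (-x ^ 2 / (2 * ν))))) y x ∧
      |y| ≤ 1 / D + 2 * c / (Real.sqrt (2 * Real.pi * ν) * D) := by
  have hs : (0:ℝ) < Real.sqrt (2 * Real.pi * ν) := Real.sqrt_pos.2 (by positivity)
  set s := Real.sqrt (2 * Real.pi * ν) with hs_def
  set ρ : ℝ → ℝ := fun t => (1 / s) * Real.exp (-t ^ 2 / (2 * ν)) with hρ_def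
  have hρpos : ∀ t, 0 < ρ t := fun t => by positivity
  have hρd : HasDerivAt ρ (-(x / ν) * ρ x) x := by
    have h1 : HasDerivAt (fun t : ℝ => -t ^ 2 / (2 * ν)) (-(x / ν)) x := by
      have h := ((hasDerivAt_pow 2 x).neg).div_const (2 * ν)
      refine h.congr_deriv ?_
      field_simp
      ring
    have h2 := (h1.exp).const_mul (1 / s)
    refine h2.congr_deriv ?_
    simp only [hρ_def]
    ring
  have hden : HasDerivAt (fun t => 1 + c * ρ t) (c * (-(x / ν) * ρ x)) x :=
    ((hρd.const_mul c).const_add 1)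
  have hdenpos : ∀ t, (0:ℝ) < 1 + c * ρ t := fun t => by
    have := hρpos t; nlinarith
  have hden1 : (1:ℝ) ≤ 1 + c * ρ x := by nlinarith [hρpos x, hc]
  have hg := ((hasDerivAt_id x).div_const D).div hden (ne_of_gt (hdenpos x))
  refine ⟨_, hg, ?_⟩
  simp only [id_eq]
  set d : ℝ := 1 + c * ρ x with hd_def
  have hdpos : 0 < d := hdenpos x
  have hy_eq : (1 / D * d - x / D * (c * (-(x / ν) * ρ x))) / d ^ 2
      = 1 / (D * d) + x ^ 2 * c * ρ x / (D * ν * d ^ 2) := by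
    field_simp
    ring
  rw [hy_eq, abs_of_nonneg (by positivity)]
  have hbd1 : 1 / (D * d) ≤ 1 / D := by
    apply one_div_le_one_div_of_le hD
    nlinarith
  have hρbd : x ^ 2 * ρ x ≤ 2 * ν / s := by
    have hu : (0:ℝ) < 2 * ν + x ^ 2 := by positivity
    have hA : (0:ℝ) < (2 * ν + x ^ 2) / (2 * ν) := by positivity
    have hle : (2 * ν + x ^ 2) / (2 * ν) ≤ Real.exp (x ^ 2 / (2 * ν)) := by
      have h := Real.add_one_le_exp (x ^ 2 / (2 * ν))
      have heq : (2 * ν + x ^ 2) / (2 * ν) = x ^ 2 / (2 * ν) + 1 := by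
        field_simp; ring
      linarith
    have hexp : Real.exp (-x ^ 2 / (2 * ν)) ≤ 2 * ν / (2 * ν + x ^ 2) := by
      have h2 := inv_anti₀ hA hle
      rw [inv_div] at h2
      rw [show -x ^ 2 / (2 * ν) = -(x ^ 2 / (2 * ν)) by ring, Real.exp_neg]
      exact h2
    have h5 : x ^ 2 * Real.exp (-x ^ 2 / (2 * ν)) ≤ 2 * ν := by
      have h6 : x ^ 2 * Real.exp (-x ^ 2 / (2 * ν)) ≤ x ^ 2 * (2 * ν / (2 * ν + x ^ 2)) :=
        mul_le_mul_of_nonneg_left hexp (sq_nonneg x)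
      have h7 : x ^ 2 * (2 * ν / (2 * ν + x ^ 2)) ≤ 2 * ν := by
        rw [mul_div_assoc'] at *
        rw [div_le_iff₀ hu]
        nlinarith
      linarith
    have : x ^ 2 * ρ x = (x ^ 2 * Real.exp (-x ^ 2 / (2 * ν))) / s := by
      simp only [hρ_def]; ring
    rw [this]
    gcongr
  have hbd2 : x ^ 2 * c * ρ x / (D * ν * d ^ 2) ≤ 2 * c / (s * D) := by
    have h1 : x ^ 2 * c * ρ x / (D * ν * d ^ 2) ≤ x ^ 2 * c * ρ x / (D * ν) := by
      apply div_le_div_of_nonneg_left (by positivity) (by positivity)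
      nlinarith [mul_pos hD hν, mul_nonneg (sub_nonneg.2 hden1) (by linarith : (0:ℝ) ≤ d + 1)]
    have h2 : x ^ 2 * c * ρ x / (D * ν) ≤ c * (2 * ν / s) / (D * ν) := by
      gcongr ?_ / (D * ν)
      nlinarith [mul_le_mul_of_nonneg_left hρbd hc.le]
    have h3 : c * (2 * ν / s) / (D * ν) = 2 * c / (s * D) := by
      field_simp
    linarith
  linarith

lemma aux_num (k r D lam w : ℝ) (hk : 0 < k) (hr : 0 < r) (hD : 0 < D)
    (hlam : 0 < lam) (hw : 0 < w) (hwle : w ≤ lam) (hrlam : r ≤ lam * D) :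
    2 * k * r / (lam ^ 2 * D) ≤ 2 * k / w := by
  have h1 : 2 * k * r / (lam ^ 2 * D) ≤ 2 * k / lam := by
    rw [div_le_div_iff₀ (by positivity) hlam]
    nlinarith [mul_le_mul_of_nonneg_left hrlam (by positivity : (0:ℝ) ≤ 2 * k * lam)]
  have h2 : 2 * k / lam ≤ 2 * k / w := by gcongr
  linarith

lemma aux_eq1 (k q r D σ lam : ℝ) (hq : q ≠ 0) (hr : r ≠ 0) (hD : D ≠ 0)
    (hσ : σ ≠ 0) (hlam : lam ≠ 0) :
    (1 / D + 2 * (k * (r ^ 2 * q / (lam ^ 2 * σ ^ 2))) / (q * r * D)) * σ ^ 2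
      = σ ^ 2 / D + 2 * k * r / (lam ^ 2 * D) := by
  field_simp

lemma aux_eq2 (k q r D σ lam : ℝ) (hq : q ≠ 0) (hr : r ≠ 0) (hD : D ≠ 0)
    (hσ : σ ≠ 0) (hlam : lam ≠ 0) :
    (1 / D + 2 * (k * (r ^ 2 * q / (lam ^ 2 * σ ^ 2))) / (q * r * D)) * lam ^ 2
      = lam ^ 2 / D + 2 * k * r / (σ ^ 2 * D) := by
  field_simp

set_option maxHeartbeats 1000000 in
/-- The Bernoulli–Gaussian denoiser η(a,b) = f(a,b)/(1+T(a,b)) has partial derivatives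
bounded by 1 + 2(1−ε)/(σ_w ε) and 1 + 2(1−ε)/(σ ε); consequently it is Lipschitz. -/
theorem stmt11 (ε σ lam σw : ℝ) (hε0 : 0 < ε) (hε1 : ε < 1) (hσ : 0 < σ) (hσw : 0 < σw)
    (hlam : σw ≤ lam) :
    let ν : ℝ := σ ^ 2 * lam ^ 2 * (σ ^ 2 + lam ^ 2 + σ ^ 2 * lam ^ 2)
    let ρ : ℝ → ℝ := fun x => (1 / Real.sqrt (2 * Real.pi * ν)) * Real.exp (-x ^ 2 / (2 * ν))
    let f : ℝ → ℝ → ℝ := fun a b =>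
      (σ ^ 2 * a + lam ^ 2 * b) / (σ ^ 2 + lam ^ 2 + σ ^ 2 * lam ^ 2)
    let T : ℝ → ℝ → ℝ := fun a b =>
      ((1 - ε) / ε) * (ν * Real.sqrt (2 * Real.pi) / (lam ^ 2 * σ ^ 2)) *
        ρ (σ ^ 2 * a + lam ^ 2 * b)
    let η : ℝ → ℝ → ℝ := fun a b => f a b / (1 + T a b)
    (∀ a b : ℝ, |deriv (fun a' => η a' b) a| ≤ 1 + 2 * (1 - ε) / (σw * ε)) ∧
    (∀ a b : ℝ, |deriv (fun b' => η a b') b| ≤ 1 + 2 * (1 - ε) / (σ * ε)) ∧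
    ∃ C : NNReal, LipschitzWith C (fun p : ℝ × ℝ => η p.1 p.2) := by
  intro ν ρ f T η
  have hlam0 : (0:ℝ) < lam := lt_of_lt_of_le hσw hlam
  have hD : (0:ℝ) < σ ^ 2 + lam ^ 2 + σ ^ 2 * lam ^ 2 := by positivity
  have hν : (0:ℝ) < ν := by simp only [ν]; positivity
  have hνdef : ν = σ ^ 2 * lam ^ 2 * (σ ^ 2 + lam ^ 2 + σ ^ 2 * lam ^ 2) := rfl
  have hk : (0:ℝ) < (1 - ε) / ε := by
    apply div_pos (by linarith) hε0
  have hc : (0:ℝ) < ((1 - ε) / ε) * (ν * Real.sqrt (2 * Real.pi) / (lam ^ 2 * σ ^ 2)) := by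
    have hq0 : (0:ℝ) < Real.sqrt (2 * Real.pi) := Real.sqrt_pos.2 (by positivity)
    positivity
  have key := aux_g ν (((1 - ε) / ε) * (ν * Real.sqrt (2 * Real.pi) / (lam ^ 2 * σ ^ 2)))
    (σ ^ 2 + lam ^ 2 + σ ^ 2 * lam ^ 2) hν hc hD
  set D : ℝ := σ ^ 2 + lam ^ 2 + σ ^ 2 * lam ^ 2 with hD_def
  set C : ℝ := ((1 - ε) / ε) * (ν * Real.sqrt (2 * Real.pi) / (lam ^ 2 * σ ^ 2)) with hC_def
  set S : ℝ := Real.sqrt (2 * Real.pi * ν) with hS_def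
  have hS : 0 < S := Real.sqrt_pos.2 (by positivity)
  set r : ℝ := Real.sqrt ν with hr_def
  have hr : 0 < r := Real.sqrt_pos.2 hν
  have hr2 : r ^ 2 = ν := Real.sq_sqrt hν.le
  set q : ℝ := Real.sqrt (2 * Real.pi) with hq_def
  have hq : 0 < q := Real.sqrt_pos.2 (by positivity)
  have hSqr : S = q * r := by
    rw [hS_def, hq_def, hr_def, Real.sqrt_mul (by positivity) ν]
  have hσ2D : σ ^ 2 ≤ D := by rw [hD_def]; nlinarith [sq_nonneg lam, sq_nonneg (σ*lam)]
  have hlam2D : lam ^ 2 ≤ D := by rw [hD_def]; nlinarith [sq_nonneg σ, sq_nonneg (σ*lam)]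
  have hrlam : r ≤ lam * D := by
    rw [hr_def, show lam * D = Real.sqrt ((lam * D) ^ 2) from
      (Real.sqrt_sq (by positivity)).symm]
    apply Real.sqrt_le_sqrt
    rw [hνdef]
    nlinarith [mul_nonneg (mul_nonneg (sq_nonneg lam) hD.le) (by linarith : (0:ℝ) ≤ D - σ ^ 2)]
  have hrσ : r ≤ σ * D := by
    rw [hr_def, show σ * D = Real.sqrt ((σ * D) ^ 2) from
      (Real.sqrt_sq (by positivity)).symm]
    apply Real.sqrt_le_sqrt
    rw [hνdef]
    nlinarith [mul_nonneg (mul_nonneg (sq_nonneg σ) hD.le) (by linarith : (0:ℝ) ≤ D - lam ^ 2)]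
  -- numeric bounds
  have hnum1 : (1 / D + 2 * C / (S * D)) * σ ^ 2 ≤ 1 + 2 * (1 - ε) / (σw * ε) := by
    have e1 : (1 / D + 2 * C / (S * D)) * σ ^ 2
        = σ ^ 2 / D + 2 * ((1 - ε) / ε) * r / (lam ^ 2 * D) := by
      rw [hC_def, hSqr, ← hr2]
      exact aux_eq1 _ _ _ _ _ _ (ne_of_gt hq) (ne_of_gt hr) (ne_of_gt hD)
        (ne_of_gt hσ) (ne_of_gt hlam0)
    have h1 : σ ^ 2 / D ≤ 1 := by rw [div_le_one hD]; exact hσ2D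
    have h2 := aux_num ((1 - ε) / ε) r D lam σw hk hr hD hlam0 hσw hlam hrlam
    have h3 : 2 * ((1 - ε) / ε) / σw = 2 * (1 - ε) / (σw * ε) := by
      rw [mul_comm σw ε, ← div_div]; ring
    rw [e1]; rw [h3] at h2
    have h4 : 2 * ((1 - ε) / ε) * r / (lam ^ 2 * D) = 2 * ((1 - ε) / ε) * r / (lam ^ 2 * D) := rfl
    linarith
  have hnum2 : (1 / D + 2 * C / (S * D)) * lam ^ 2 ≤ 1 + 2 * (1 - ε) / (σ * ε) := by
    have e1 : (1 / D + 2 * C / (S * D)) * lam ^ 2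
        = lam ^ 2 / D + 2 * ((1 - ε) / ε) * r / (σ ^ 2 * D) := by
      rw [hC_def, hSqr, ← hr2]
      exact aux_eq2 _ _ _ _ _ _ (ne_of_gt hq) (ne_of_gt hr) (ne_of_gt hD)
        (ne_of_gt hσ) (ne_of_gt hlam0)
    have h1 : lam ^ 2 / D ≤ 1 := by rw [div_le_one hD]; exact hlam2D
    have h2 := aux_num ((1 - ε) / ε) r D σ σ hk hr hD hσ hσ le_rfl hrσ
    have h3 : 2 * ((1 - ε) / ε) / σ = 2 * (1 - ε) / (σ * ε) := by
      rw [mul_comm σ ε, ← div_div]; ring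
    rw [e1]; rw [h3] at h2
    linarith
  refine ⟨?_, ?_, ?_⟩
  · intro a b
    obtain ⟨y, hy, hyb⟩ := key (σ ^ 2 * a + lam ^ 2 * b)
    have hi : HasDerivAt (fun a' : ℝ => σ ^ 2 * a' + lam ^ 2 * b) (σ ^ 2) a := by
      simpa using ((hasDerivAt_id a).const_mul (σ ^ 2)).add_const (lam ^ 2 * b)
    have hcomp : HasDerivAt (fun a' => η a' b) (y * σ ^ 2) a := by
      have := HasDerivAt.comp a hy hi; exact this
    rw [hcomp.deriv, abs_mul, abs_of_nonneg (sq_nonneg σ)]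
    calc |y| * σ ^ 2 ≤ (1 / D + 2 * C / (S * D)) * σ ^ 2 :=
          mul_le_mul_of_nonneg_right hyb (sq_nonneg σ)
      _ ≤ _ := hnum1
  · intro a b
    obtain ⟨y, hy, hyb⟩ := key (σ ^ 2 * a + lam ^ 2 * b)
    have hi : HasDerivAt (fun b' : ℝ => σ ^ 2 * a + lam ^ 2 * b') (lam ^ 2) b := by
      simpa using (((hasDerivAt_id b).const_mul (lam ^ 2)).const_add (σ ^ 2 * a))
    have hcomp : HasDerivAt (fun b' => η a b') (y * lam ^ 2) b := by
      have := HasDerivAt.comp b hy hi; exact this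
    rw [hcomp.deriv, abs_mul, abs_of_nonneg (sq_nonneg lam)]
    calc |y| * lam ^ 2 ≤ (1 / D + 2 * C / (S * D)) * lam ^ 2 :=
          mul_le_mul_of_nonneg_right hyb (sq_nonneg lam)
      _ ≤ _ := hnum2
  · have hM0 : (0:ℝ) ≤ 1 / D + 2 * C / (S * D) := by positivity
    have hlipg : LipschitzWith (1 / D + 2 * C / (S * D)).toNNReal
        (fun x : ℝ => (x / D) / (1 + C * ((1 / S) * Real.exp (-x ^ 2 / (2 * ν))))) := by
      apply lipschitzWith_of_nnnorm_deriv_le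
      · intro x; obtain ⟨y, hy, _⟩ := key x; exact hy.differentiableAt
      · intro x; obtain ⟨y, hy, hyb⟩ := key x
        rw [hy.deriv, ← NNReal.coe_le_coe, coe_nnnorm, Real.coe_toNNReal _ hM0,
          Real.norm_eq_abs]
        exact hyb
    have hlipL : LipschitzWith (σ ^ 2 + lam ^ 2).toNNReal
        (fun p : ℝ × ℝ => σ ^ 2 * p.1 + lam ^ 2 * p.2) := by
      apply LipschitzWith.of_dist_le_mul
      intro p p'
      have h1 : dist p.1 p'.1 ≤ dist p p' := by rw [Prod.dist_eq]; exact le_max_left _ _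
      have h2 : dist p.2 p'.2 ≤ dist p p' := by rw [Prod.dist_eq]; exact le_max_right _ _
      rw [Real.dist_eq] at h1 h2
      rw [Real.dist_eq, Real.coe_toNNReal _ (by positivity)]
      calc |σ ^ 2 * p.1 + lam ^ 2 * p.2 - (σ ^ 2 * p'.1 + lam ^ 2 * p'.2)|
          = |σ ^ 2 * (p.1 - p'.1) + lam ^ 2 * (p.2 - p'.2)| := by ring_nf
        _ ≤ |σ ^ 2 * (p.1 - p'.1)| + |lam ^ 2 * (p.2 - p'.2)| := abs_add_le _ _
        _ = σ ^ 2 * |p.1 - p'.1| + lam ^ 2 * |p.2 - p'.2| := by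
            rw [abs_mul, abs_mul, abs_of_nonneg (sq_nonneg σ), abs_of_nonneg (sq_nonneg lam)]
        _ ≤ (σ ^ 2 + lam ^ 2) * dist p p' := by
            nlinarith [abs_nonneg (p.1 - p'.1), abs_nonneg (p.2 - p'.2),
              dist_nonneg (x := p) (y := p')]
    exact ⟨_, hlipg.comp hlipL⟩
end

section
/- For any product T(a,b)·f(a,b) = ((1−ε)/ε)·√(2π)·(σ²a + λ²b)·ρ_ν(σ²a + λ²b) with ν = σ²λ²(σ²+λ²+σ²λ²), the partial derivative with respect to a satisfies |∂(T·f)/∂a| = ((1−ε)/ε)·(√(2π)σ²/ν)·ρ_ν(σ²a+λ²b)·|ν − (σ²a+λ²b)²| ≤ 2(1−ε)/(σ_w·ε), provided λ ≥ σ_w > 0. -/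
set_option maxHeartbeats 1000000 in
/-- For T·f(a,b) = ((1−ε)/ε)√(2π)(σ²a+λ²b)ρ_ν(σ²a+λ²b), the derivative in a equals
((1−ε)/ε)(√(2π)σ²/ν)ρ_ν(σ²a+λ²b)|ν − (σ²a+λ²b)²| in absolute value, and is bounded by
2(1−ε)/(σ_w ε) when λ ≥ σ_w > 0. -/
theorem stmt12 (ε σ lam σw : ℝ) (hε0 : 0 < ε) (hε1 : ε < 1) (hσ : 0 < σ) (hσw : 0 < σw)
    (hlam : σw ≤ lam) (b : ℝ) :
    let ν : ℝ := σ ^ 2 * lam ^ 2 * (σ ^ 2 + lam ^ 2 + σ ^ 2 * lam ^ 2)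
    let ρ : ℝ → ℝ := fun x => (1 / Real.sqrt (2 * Real.pi * ν)) * Real.exp (-x ^ 2 / (2 * ν))
    ∀ a : ℝ,
      |deriv (fun a' : ℝ => ((1 - ε) / ε) * Real.sqrt (2 * Real.pi) *
          (σ ^ 2 * a' + lam ^ 2 * b) * ρ (σ ^ 2 * a' + lam ^ 2 * b)) a| =
        ((1 - ε) / ε) * (Real.sqrt (2 * Real.pi) * σ ^ 2 / ν) *
          ρ (σ ^ 2 * a + lam ^ 2 * b) * |ν - (σ ^ 2 * a + lam ^ 2 * b) ^ 2| ∧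
      ((1 - ε) / ε) * (Real.sqrt (2 * Real.pi) * σ ^ 2 / ν) *
          ρ (σ ^ 2 * a + lam ^ 2 * b) * |ν - (σ ^ 2 * a + lam ^ 2 * b) ^ 2| ≤
        2 * (1 - ε) / (σw * ε) := by
  intro ν ρ a
  have hνdef : ν = σ ^ 2 * lam ^ 2 * (σ ^ 2 + lam ^ 2 + σ ^ 2 * lam ^ 2) := rfl
  have hlam0 : 0 < lam := lt_of_lt_of_le hσw hlam
  have hν : 0 < ν := by
    rw [hνdef]
    have h1 : 0 < σ ^ 2 := pow_pos hσ 2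
    have h2 : 0 < lam ^ 2 := pow_pos hlam0 2
    positivity
  have hπ : (0:ℝ) < Real.sqrt (2 * Real.pi) := Real.sqrt_pos.mpr (by positivity)
  have hs : (0:ℝ) < Real.sqrt ν := Real.sqrt_pos.mpr hν
  have hs2 : Real.sqrt ν ^ 2 = ν := Real.sq_sqrt hν.le
  have hsplit : Real.sqrt (2 * Real.pi * ν) = Real.sqrt (2 * Real.pi) * Real.sqrt ν :=
    Real.sqrt_mul (by positivity) ν
  set y := σ ^ 2 * a + lam ^ 2 * b with hy
  set E := Real.exp (-y ^ 2 / (2 * ν)) with hEdef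
  have hE : 0 < E := Real.exp_pos _
  have hρy : ρ y = (1 / (Real.sqrt (2 * Real.pi) * Real.sqrt ν)) * E := by
    simp only [ρ, hsplit]
    rfl
  have hC : 0 ≤ (1 - ε) / ε := div_nonneg (by linarith) hε0.le
  -- derivative computation
  have hyd : HasDerivAt (fun a' : ℝ => σ ^ 2 * a' + lam ^ 2 * b) (σ ^ 2) a := by
    simpa using ((hasDerivAt_id a).const_mul (σ ^ 2)).add_const (lam ^ 2 * b)
  have hu : HasDerivAt (fun a' : ℝ => -(σ ^ 2 * a' + lam ^ 2 * b) ^ 2 / (2 * ν))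
      (-(2 * y * σ ^ 2) / (2 * ν)) a := by
    simpa using ((hyd.pow 2).neg).div_const (2 * ν)
  have hρd : HasDerivAt (fun a' : ℝ => ρ (σ ^ 2 * a' + lam ^ 2 * b))
      ((1 / Real.sqrt (2 * Real.pi * ν)) * (E * (-(2 * y * σ ^ 2) / (2 * ν)))) a := by
    simpa [ρ] using (hu.exp.const_mul (1 / Real.sqrt (2 * Real.pi * ν)))
  clear_value ν ρ
  have h1 : HasDerivAt (fun a' : ℝ => (1 - ε) / ε * Real.sqrt (2 * Real.pi) *
      (σ ^ 2 * a' + lam ^ 2 * b)) ((1 - ε) / ε * Real.sqrt (2 * Real.pi) * σ ^ 2) a :=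
    hyd.const_mul _
  have hF : HasDerivAt (fun a' : ℝ => (1 - ε) / ε * Real.sqrt (2 * Real.pi) *
      (σ ^ 2 * a' + lam ^ 2 * b) * ρ (σ ^ 2 * a' + lam ^ 2 * b))
      ((1 - ε) / ε * Real.sqrt (2 * Real.pi) * σ ^ 2 * ρ y +
        (1 - ε) / ε * Real.sqrt (2 * Real.pi) * y *
          ((1 / Real.sqrt (2 * Real.pi * ν)) * (E * (-(2 * y * σ ^ 2) / (2 * ν))))) a :=
    h1.mul hρd
  have hDval : deriv (fun a' : ℝ => (1 - ε) / ε * Real.sqrt (2 * Real.pi) *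
      (σ ^ 2 * a' + lam ^ 2 * b) * ρ (σ ^ 2 * a' + lam ^ 2 * b)) a =
      (1 - ε) / ε * (Real.sqrt (2 * Real.pi) * σ ^ 2 / ν) * ρ y * (ν - y ^ 2) := by
    rw [hF.deriv, hρy, hsplit]
    field_simp
    ring
  have hC0 : 0 ≤ (1 - ε) / ε * (Real.sqrt (2 * Real.pi) * σ ^ 2 / ν) * ρ y := by
    rw [hρy]; positivity
  constructor
  · rw [hDval, abs_mul, abs_of_nonneg hC0]
  · -- the bound
    have hEbound : E * |ν - y ^ 2| ≤ 2 * ν := by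
      have ht : (0:ℝ) ≤ y ^ 2 / (2 * ν) := by positivity
      have h1t : 0 < 1 + y ^ 2 / (2 * ν) := by positivity
      have hexp : E ≤ (1 + y ^ 2 / (2 * ν))⁻¹ := by
        rw [hEdef, neg_div, Real.exp_neg]
        exact inv_anti₀ h1t (by linarith [Real.add_one_le_exp (y ^ 2 / (2 * ν))])
      have habs : |ν - y ^ 2| ≤ 2 * ν + y ^ 2 := by
        rw [abs_sub_le_iff]; constructor <;> linarith [hν, sq_nonneg y]
      calc E * |ν - y ^ 2| ≤ (1 + y ^ 2 / (2 * ν))⁻¹ * (2 * ν + y ^ 2) :=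
            mul_le_mul hexp habs (abs_nonneg _) (by positivity)
        _ = 2 * ν := by
            rw [inv_mul_eq_div, div_eq_iff (ne_of_gt h1t)]
            field_simp
    have hslow : σ ^ 2 * σw ≤ Real.sqrt ν := by
      have : σ ^ 2 * σw ≤ σ ^ 2 * lam := by nlinarith
      refine this.trans ?_
      rw [show σ ^ 2 * lam = Real.sqrt ((σ ^ 2 * lam) ^ 2) from
        (Real.sqrt_sq (by positivity)).symm]
      apply Real.sqrt_le_sqrt
      rw [hνdef]; nlinarith [sq_nonneg (σ * lam ^ 2), sq_nonneg (σ ^ 2 * lam ^ 2)]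
    have hkey : (1 - ε) / ε * (Real.sqrt (2 * Real.pi) * σ ^ 2 / ν) * ρ y *
        |ν - y ^ 2| = ((1 - ε) / ε * σ ^ 2 / (ν * Real.sqrt ν)) * (E * |ν - y ^ 2|) := by
      rw [hρy]
      field_simp
    rw [hkey]
    have step1 : ((1 - ε) / ε * σ ^ 2 / (ν * Real.sqrt ν)) * (E * |ν - y ^ 2|) ≤
        ((1 - ε) / ε * σ ^ 2 / (ν * Real.sqrt ν)) * (2 * ν) := by
      apply mul_le_mul_of_nonneg_left hEbound
      positivity
    refine step1.trans ?_
    have : ((1 - ε) / ε * σ ^ 2 / (ν * Real.sqrt ν)) * (2 * ν) =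
        2 * ((1 - ε) / ε) * (σ ^ 2 / Real.sqrt ν) := by
      rw [div_mul_eq_mul_div, mul_comm ν (Real.sqrt ν), ← mul_assoc,
        mul_div_mul_right _ _ hν.ne']
      ring
    rw [this]
    have hfrac : σ ^ 2 / Real.sqrt ν ≤ 1 / σw := by
      rw [div_le_div_iff₀ hs hσw]
      linarith [hslow]
    calc 2 * ((1 - ε) / ε) * (σ ^ 2 / Real.sqrt ν) ≤ 2 * ((1 - ε) / ε) * (1 / σw) := by
          apply mul_le_mul_of_nonneg_left hfrac
          have h2 : 0 ≤ (1 - ε) / ε := hC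
          linarith
      _ = 2 * (1 - ε) / (σw * ε) := by
          rw [mul_one_div, ← mul_div_assoc, div_div, mul_comm ε σw]
end
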